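/- Under the conditional independence assumption Z ⟂ R | (Y, A), the joint conditional law of (Y,R) given (A,Z) factorizes as f(y, r | a, z) = c(a, z) · f(r | a, y₁) · f(y | R=1, a, z) · OR(a,y)^{1−r} for r ∈ {0,1}, where c(a, z) = [f(R=1 | a) / f(R=1 | a, y₁)] · [f(z | R=1, a) / f(z | a)]. -/

import Mathlib

open Finset

variable {A Y Z : Type} [Fintype A] [Fintype Y] [Fintype Z]

/-- Marginal mass `f(a, y)` of the joint mass function `f` on `(A, Y, Z, R)`,
with `R` encoded by `Bool` (`true` meaning `R = 1`). -/
noncomputable def mAY (f : A → Y → Z → Bool → ℝ) (a : A) (y : Y) : ℝ :=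
  ∑ z, ∑ r, f a y z r

/-- Marginal mass `f(a, y, z)`. -/
noncomputable def mAYZ (f : A → Y → Z → Bool → ℝ) (a : A) (y : Y) (z : Z) : ℝ :=
  ∑ r, f a y z r

/-- Marginal mass `f(a, y, r)`. -/
noncomputable def mAYR (f : A → Y → Z → Bool → ℝ) (a : A) (y : Y) (r : Bool) : ℝ :=
  ∑ z, f a y z r

/-- Marginal mass `f(a)`. -/
noncomputable def mA (f : A → Y → Z → Bool → ℝ) (a : A) : ℝ :=
  ∑ y, ∑ z, ∑ r, f a y z r

/-- Marginal mass `f(a, r)`. -/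
noncomputable def mAR (f : A → Y → Z → Bool → ℝ) (a : A) (r : Bool) : ℝ :=
  ∑ y, ∑ z, f a y z r

/-- Marginal mass `f(a, z)`. -/
noncomputable def mAZ (f : A → Y → Z → Bool → ℝ) (a : A) (z : Z) : ℝ :=
  ∑ y, ∑ r, f a y z r

/-- Marginal mass `f(a, z, r)`. -/
noncomputable def mAZR (f : A → Y → Z → Bool → ℝ) (a : A) (z : Z) (r : Bool) : ℝ :=
  ∑ y, f a y z r

/-- The shadow-variable assumption (a): the conditional independence `Z ⟂ R | (Y, A)`,
expressed via joint masses as `f(a,y,z,r) · f(a,y) = f(a,y,z) · f(a,y,r)`,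
i.e. `f(z, r | y, a) = f(z | y, a) · f(r | y, a)`. -/
def CondIndepZR (f : A → Y → Z → Bool → ℝ) : Prop :=
  ∀ (a : A) (y : Y) (z : Z) (r : Bool),
    f a y z r * mAY f a y = mAYZ f a y z * mAYR f a y r

/-- The odds-ratio function
`OR(a,y) = [f(R=0 | a, y) · f(R=1 | a, y₁)] / [f(R=1 | a, y) · f(R=0 | a, y₁)]`,
with reference value `y₁`. -/
noncomputable def OddsRatio (f : A → Y → Z → Bool → ℝ) (y₁ : Y) (a : A) (y : Y) : ℝ :=
  ((mAYR f a y false / mAY f a y) * (mAYR f a y₁ true / mAY f a y₁)) /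
    ((mAYR f a y true / mAY f a y) * (mAYR f a y₁ false / mAY f a y₁))

/-- The normalizing constant
`c(a, z) = [f(R=1 | a) / f(R=1 | a, y₁)] · [f(z | R=1, a) / f(z | a)]`. -/
noncomputable def normConst (f : A → Y → Z → Bool → ℝ) (y₁ : Y) (a : A) (z : Z) : ℝ :=
  ((mAR f a true / mA f a) / (mAYR f a y₁ true / mAY f a y₁)) *
    ((mAZR f a z true / mAR f a true) / (mAZ f a z / mA f a))

/-- equation (3.5): under the shadow-variable conditional independence
`Z ⟂ R | (Y, A)`, the joint conditional law of `(Y, R)` given `(A, Z)` factorizes as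
`f(y, r | a, z) = c(a,z) · f(r | a, y₁) · f(y | R=1, a, z) · OR(a,y)^{1-r}`. -/
theorem factorization_of_condIndep
    (f : A → Y → Z → Bool → ℝ)
    (hpos : ∀ (a : A) (y : Y) (z : Z) (r : Bool), 0 < f a y z r)
    (hsum : ∑ a, ∑ y, ∑ z, ∑ r, f a y z r = 1)
    (hci : CondIndepZR f) (y₁ : Y) :
    ∀ (a : A) (y : Y) (z : Z) (r : Bool),
      f a y z r / mAZ f a z =
        normConst f y₁ a z * (mAYR f a y₁ r / mAY f a y₁) *
          (f a y z true / mAZR f a z true) *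
          (OddsRatio f y₁ a y) ^ (if r then 0 else 1 : ℕ) := by

  intro a y z r
  haveI : Nonempty Z := ⟨z⟩
  haveI : Nonempty Y := ⟨y₁⟩
  have hAY : ∀ y', 0 < mAY f a y' := fun y' =>
    Finset.sum_pos (fun z' _ => Finset.sum_pos (fun r' _ => hpos a y' z' r') Finset.univ_nonempty)
      Finset.univ_nonempty
  have hAYR : ∀ y' r', 0 < mAYR f a y' r' := fun y' r' =>
    Finset.sum_pos (fun z' _ => hpos a y' z' r') Finset.univ_nonempty
  have hAZ : 0 < mAZ f a z :=
    Finset.sum_pos (fun y' _ => Finset.sum_pos (fun r' _ => hpos a y' z r') Finset.univ_nonempty)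
      Finset.univ_nonempty
  have hAZR : ∀ r', 0 < mAZR f a z r' := fun r' =>
    Finset.sum_pos (fun y' _ => hpos a y' z r') Finset.univ_nonempty
  have hA : 0 < mA f a :=
    Finset.sum_pos (fun y' _ => Finset.sum_pos (fun z' _ =>
      Finset.sum_pos (fun r' _ => hpos a y' z' r') Finset.univ_nonempty) Finset.univ_nonempty)
      Finset.univ_nonempty
  have hAR : ∀ r', 0 < mAR f a r' := fun r' =>
    Finset.sum_pos (fun y' _ => Finset.sum_pos (fun z' _ => hpos a y' z' r') Finset.univ_nonempty)
      Finset.univ_nonempty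
  have h1 := (hAY y).ne'
  have h2 := (hAY y₁).ne'
  have h3 := (hAYR y true).ne'
  have h4 := (hAYR y false).ne'
  have h5 := (hAYR y₁ true).ne'
  have h6 := (hAYR y₁ false).ne'
  have h7 := hAZ.ne'
  have h8 := (hAZR true).ne'
  have h9 := hA.ne'
  have h10 := (hAR true).ne'
  have key : f a y z false * mAYR f a y true = f a y z true * mAYR f a y false := by
    have h2' : (f a y z false * mAYR f a y true) * mAY f a y =
        (f a y z true * mAYR f a y false) * mAY f a y := by
      linear_combination mAYR f a y true * (hci a y z false) - mAYR f a y false * (hci a y z true)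
    exact mul_right_cancel₀ h1 h2'
  unfold normConst OddsRatio
  cases r with
  | true =>
    simp only [if_true, pow_zero, mul_one]
    field_simp
  | false =>
    simp only [Bool.false_eq_true, if_false, pow_one]
    field_simp
    linear_combination key
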